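/- Let an observational semantics over types S, R, A with transition relation Tr, local extraction function E_l, local reconstruction function I_l, and initial states S₀ satisfy the local faithfulness condition: for all r, s, s' with Tr(r, s, s') and every actual trace T^w obtained by extraction along a generated virtual trace from an initial state ending in s, setting a = E_l(s, r, s', T^w), one has I_l(s, T^w ++ [a]) = (r, s'). Then the extended extraction E is injective on the set of finite generated virtual traces: if T^v and U^v are generated virtual traces from initial states and E(T^v) = E(U^v), then T^v = U^v (the extraction is done without loss of information). -/

import Mathlib

variable {S R A : Type*}

/-- A generated virtual trace from a state: each event `(rᵢ, sᵢ)` is a transition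
from the previous state. -/
def IsGenTrace (Tr : R → S → S → Prop) : S → List (R × S) → Prop
  | _, [] => True
  | s, (r, s') :: evs => Tr r s s' ∧ IsGenTrace Tr s' evs

/-- The final state reached by a virtual trace. -/
def finalState : S → List (R × S) → S
  | s, [] => s
  | _, (_, s') :: evs => finalState s' evs

/-- Auxiliary extraction with an accumulator holding the already generated actual trace. -/
def extractAux (El : S → R → S → List A → A) : S → List A → List (R × S) → List A
  | _, _, [] => []
  | s, acc, (r, s') :: evs =>
      El s r s' acc :: extractAux El s' (acc ++ [El s r s' acc]) evs

/-- The extended extraction function `E`: `aᵢ = E_l(s_{i-1}, rᵢ, sᵢ, [a₁,…,a_{i-1}])`. -/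
def extract (El : S → R → S → List A → A) (s₀ : S) (evs : List (R × S)) : List A :=
  extractAux El s₀ [] evs

/-- Auxiliary reconstruction with an accumulator holding the already read actual trace. -/
def reconAux (Il : S → List A → R × S) : S → List A → List A → List (R × S)
  | _, _, [] => []
  | s, acc, a :: as =>
      Il s (acc ++ [a]) :: reconAux Il (Il s (acc ++ [a])).2 (acc ++ [a]) as

/-- The extended reconstruction function `I`: `(rᵢ, sᵢ) = I_l(s_{i-1}, [a₁,…,aᵢ])`. -/
def recon (Il : S → List A → R × S) (s₀ : S) (as : List A) : List (R × S) :=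
  reconAux Il s₀ [] as

/-- The local faithfulness condition. -/
def LocalFaithful (Tr : R → S → S → Prop) (El : S → R → S → List A → A)
    (Il : S → List A → R × S) (S₀ : Set S) : Prop :=
  ∀ r s s', Tr r s s' →
    ∀ s₀ ∈ S₀, ∀ evs : List (R × S), IsGenTrace Tr s₀ evs → finalState s₀ evs = s →
      Il s (extract El s₀ evs ++ [El s r s' (extract El s₀ evs)]) = (r, s')

lemma finalState_append (s : S) (pre evs : List (R × S)) :
    finalState s (pre ++ evs) = finalState (finalState s pre) evs := by
  induction pre generalizing s with
  | nil => rfl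
  | cons p ps ih => cases p; simp [finalState, ih]

lemma isGenTrace_append (Tr : R → S → S → Prop) (s : S) (pre evs : List (R × S)) :
    IsGenTrace Tr s (pre ++ evs) ↔
      IsGenTrace Tr s pre ∧ IsGenTrace Tr (finalState s pre) evs := by
  induction pre generalizing s with
  | nil => simp [IsGenTrace, finalState]
  | cons p ps ih => cases p; simp [IsGenTrace, finalState, ih, and_assoc]

lemma extractAux_append (El : S → R → S → List A → A) (s : S) (acc : List A)
    (pre evs : List (R × S)) :
    extractAux El s acc (pre ++ evs) =
      extractAux El s acc pre ++
        extractAux El (finalState s pre) (acc ++ extractAux El s acc pre) evs := by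
  induction pre generalizing s acc with
  | nil => simp [extractAux, finalState]
  | cons p ps ih => cases p; simp [extractAux, finalState, ih]

lemma reconAux_extract
    (Tr : R → S → S → Prop) (El : S → R → S → List A → A) (Il : S → List A → R × S)
    (S₀ : Set S) (hLF : LocalFaithful Tr El Il S₀) (s₀ : S) (hs₀ : s₀ ∈ S₀) :
    ∀ evs pre : List (R × S), IsGenTrace Tr s₀ (pre ++ evs) →
      reconAux Il (finalState s₀ pre) (extract El s₀ pre)
        (extractAux El (finalState s₀ pre) (extract El s₀ pre) evs) = evs := by
  intro evs
  induction evs with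
  | nil => intro pre _; simp [extractAux, reconAux]
  | cons p rest ih =>
    rcases p with ⟨r, s'⟩
    intro pre hgen
    have hsplit := (isGenTrace_append Tr s₀ pre ((r, s') :: rest)).1 hgen
    obtain ⟨hpre, htr, hrest⟩ : IsGenTrace Tr s₀ pre ∧
        Tr r (finalState s₀ pre) s' ∧ IsGenTrace Tr s' rest := ⟨hsplit.1, hsplit.2⟩
    set s := finalState s₀ pre with hs
    set a := El s r s' (extract El s₀ pre) with ha
    have hIl : Il s (extract El s₀ pre ++ [a]) = (r, s') :=
      hLF r s s' htr s₀ hs₀ pre hpre rfl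
    have hfin : finalState s₀ (pre ++ [(r, s')]) = s' := by
      rw [finalState_append]; rfl
    have hext : extract El s₀ (pre ++ [(r, s')]) = extract El s₀ pre ++ [a] := by
      show extractAux El s₀ [] (pre ++ [(r, s')]) = _
      rw [extractAux_append]
      simp only [extract, extractAux, List.nil_append]
      rfl
    have hgen' : IsGenTrace Tr s₀ ((pre ++ [(r, s')]) ++ rest) := by
      simpa using hgen
    have := ih (pre ++ [(r, s')]) hgen'
    rw [hfin, hext] at this
    simp only [extractAux, reconAux, ← ha, hIl]
    rw [this]

lemma recon_extract
    (Tr : R → S → S → Prop) (El : S → R → S → List A → A) (Il : S → List A → R × S)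
    (S₀ : Set S) (hLF : LocalFaithful Tr El Il S₀) (s₀ : S) (hs₀ : s₀ ∈ S₀)
    (evs : List (R × S)) (hgen : IsGenTrace Tr s₀ evs) :
    recon Il s₀ (extract El s₀ evs) = evs :=
  reconAux_extract Tr El Il S₀ hLF s₀ hs₀ evs [] hgen

/-- Under the local faithfulness condition, the extended extraction
`E` is injective on the set of finite generated virtual traces: extraction is done
without loss of information. -/
theorem extract_injOn_genTraces
    (Tr : R → S → S → Prop)
    (hFun : ∀ r s s' s'', Tr r s s' → Tr r s s'' → s' = s'')
    (El : S → R → S → List A → A) (Il : S → List A → R × S) (S₀ : Set S)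
    (hLF : LocalFaithful Tr El Il S₀) :
    ∀ s₀ ∈ S₀, ∀ u₀ ∈ S₀, ∀ evs fvs : List (R × S),
      IsGenTrace Tr s₀ evs → IsGenTrace Tr u₀ fvs →
      (s₀, extract El s₀ evs) = (u₀, extract El u₀ fvs) →
      (s₀, evs) = (u₀, fvs) := by
  intro s₀ hs₀ u₀ hu₀ evs fvs hg hf heq
  obtain ⟨h1, h2⟩ := Prod.mk.injEq .. ▸ heq
  subst h1
  refine Prod.ext rfl ?_
  calc evs = recon Il s₀ (extract El s₀ evs) :=
        (recon_extract Tr El Il S₀ hLF s₀ hs₀ evs hg).symm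
    _ = recon Il s₀ (extract El s₀ fvs) := by rw [h2]
    _ = fvs := recon_extract Tr El Il S₀ hLF s₀ hu₀ fvs hf
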